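/- Let a₁,...,a_r, a be integers with 0 ≤ a₁ ≤ ... ≤ a_r, r ≥ 2, a ≥ 1, and ∑_{i=1}^r 2^{a_i} = 3·2^a. If the a_i are not (a, a+1) for r=2 and not (a,a,a) for r=3, then there exists a subset J ⊆ {1,...,r} with ∑_{i∈J} 2^{a_i} = 2^a. -/

import Mathlib

lemma aux_greedy : ∀ (r : ℕ) (a : ℕ → ℕ) (T : ℕ),
    (∀ i j, i ≤ j → j < r → a i ≤ a j) →
    (∀ i, i < r → 2 ^ (a i) ∣ T) →
    T ≤ ∑ i ∈ Finset.range r, 2 ^ (a i) →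
    ∃ J ⊆ Finset.range r, ∑ i ∈ J, 2 ^ (a i) = T := by
  intro r
  induction r with
  | zero =>
    intro a T _ _ hle
    simp only [Finset.range_zero, Finset.sum_empty, Nat.le_zero] at hle
    exact ⟨∅, by simp, by simp [hle]⟩
  | succ r ih =>
    intro a T hmono hdvd hle
    rcases Nat.eq_zero_or_pos T with h0 | hpos
    · exact ⟨∅, by simp, by simp [h0]⟩
    · have ht : 2 ^ (a r) ∣ T := hdvd r (Nat.lt_succ_self r)
      have htle : 2 ^ (a r) ≤ T := Nat.le_of_dvd hpos ht
      have hsum : ∑ i ∈ Finset.range (r + 1), 2 ^ (a i)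
          = ∑ i ∈ Finset.range r, 2 ^ (a i) + 2 ^ (a r) :=
        Finset.sum_range_succ _ _
      have hle' : T - 2 ^ (a r) ≤ ∑ i ∈ Finset.range r, 2 ^ (a i) := by omega
      obtain ⟨J, hJ, hJsum⟩ := ih a (T - 2 ^ (a r))
        (fun i j hij hj => hmono i j hij (Nat.lt_succ_of_lt hj))
        (fun i hi => by
          have h1 : 2 ^ (a i) ∣ T := hdvd i (Nat.lt_succ_of_lt hi)
          have h2 : 2 ^ (a i) ∣ 2 ^ (a r) :=
            pow_dvd_pow 2 (hmono i r (Nat.le_of_lt hi) (Nat.lt_succ_self r))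
          exact Nat.dvd_sub h1 h2)
        hle'
      refine ⟨insert r J, ?_, ?_⟩
      · intro x hx
        rcases Finset.mem_insert.mp hx with h | h
        · simp [h]
        · exact Finset.mem_range.mpr (Nat.lt_succ_of_lt (Finset.mem_range.mp (hJ h)))
      · have hrJ : r ∉ J := fun h => absurd (Finset.mem_range.mp (hJ h)) (lt_irrefl r)
        rw [Finset.sum_insert hrJ, hJsum]
        omega

theorem stmt_14 (r A : ℕ) (hr : 2 ≤ r) (hA : 1 ≤ A) (a : ℕ → ℕ)
    (hmono : ∀ i j, i ≤ j → j < r → a i ≤ a j)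
    (hsum : ∑ i ∈ Finset.range r, 2 ^ (a i) = 3 * 2 ^ A)
    (hnot₁ : ¬ (r = 2 ∧ a 0 = A ∧ a 1 = A + 1))
    (hnot₂ : ¬ (r = 3 ∧ a 0 = A ∧ a 1 = A ∧ a 2 = A)) :
    ∃ J ⊆ Finset.range r, ∑ i ∈ J, 2 ^ (a i) = 2 ^ A := by
  have hr1 : r - 1 < r := by omega
  by_cases hcase : a (r - 1) ≤ A
  · apply aux_greedy r a (2 ^ A) hmono
    · intro i hi
      exact pow_dvd_pow 2 (le_trans (hmono i (r - 1) (by omega) hr1) hcase)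
    · rw [hsum]
      have : 0 < 2 ^ A := Nat.pow_pos (by norm_num)
      omega
  · -- largest exponent is > A; show it equals A + 1
    push_neg at hcase
    have hterm : 2 ^ (a (r - 1)) ≤ 3 * 2 ^ A := by
      rw [← hsum]
      exact Finset.single_le_sum (f := fun i => 2 ^ a i) (fun i _ => Nat.zero_le _) (Finset.mem_range.mpr hr1)
    have heq : a (r - 1) = A + 1 := by
      by_contra h
      have h2 : A + 2 ≤ a (r - 1) := by omega
      have h3 : 2 ^ (A + 2) ≤ 2 ^ (a (r - 1)) :=
        Nat.pow_le_pow_right (by norm_num) h2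
      have h4 : 2 ^ (A + 2) = 4 * 2 ^ A := by ring
      have : 0 < 2 ^ A := Nat.pow_pos (by norm_num)
      omega
    refine ⟨Finset.range (r - 1), Finset.range_subset_range.mpr (by omega), ?_⟩
    have hstep : ∑ i ∈ Finset.range (r - 1 + 1), 2 ^ (a i)
        = ∑ i ∈ Finset.range (r - 1), 2 ^ (a i) + 2 ^ (a (r - 1)) :=
      Finset.sum_range_succ _ _
    have hr' : r - 1 + 1 = r := by omega
    rw [hr', hsum, heq] at hstep
    have h5 : 2 ^ (A + 1) = 2 * 2 ^ A := by ring
    have : 0 < 2 ^ A := Nat.pow_pos (by norm_num)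
    omega
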